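/- Fix k ∈ {1, …, n}. The dual cone of the sum-of-largest-entries cone K_vSum = {(t, x) ∈ ℝ × ℝⁿ : ∑_{i=1}^k x_{[i]} ≤ t}, with respect to the standard inner product on ℝ^{n+1}, equals {(t, x) ∈ ℝ × ℝⁿ : −t ≤ x_i ≤ 0 for i = 1, …, n, and ∑_{i=1}^n x_i = −t k}. -/

import Mathlib

open Finset

/-- The entries of `x` sorted in nonincreasing order, so `sortDesc x i = x_{[i+1]}`
(`x_{[1]} ≥ … ≥ x_{[n]}` in one-based notation). -/
noncomputable def sortDesc {n : ℕ} (x : Fin n → ℝ) : Fin n → ℝ :=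
  fun i => (x ∘ Tuple.sort x) i.rev

/-- The sum of the `k` largest entries of `x`, `∑_{i=1}^k x_{[i]}`. -/
noncomputable def sumLargest {n : ℕ} (k : ℕ) (x : Fin n → ℝ) : ℝ :=
  ∑ i : Fin n, if (i : ℕ) < k then sortDesc x i else 0

lemma sortDesc_antitone {n : ℕ} (x : Fin n → ℝ) : Antitone (sortDesc x) := by
  intro i j hij
  exact Tuple.monotone_sort x (Fin.rev_le_rev.mpr hij)

lemma sum_ite_const {n k : ℕ} (hkn : k ≤ n) (a : ℝ) :
    ∑ i : Fin n, (if (i : ℕ) < k then a else 0) = k * a := by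
  rw [Fin.sum_univ_eq_sum_range (fun i => if i < k then a else 0) n]
  rw [Finset.range_eq_Ico, ← Finset.sum_Ico_consecutive _ (Nat.zero_le k) hkn]
  rw [Finset.sum_ite_of_true, Finset.sum_ite_of_false]
  · simp [mul_comm]
  · intro i hi; simp at hi; omega
  · intro i hi; simp at hi; omega

noncomputable def tau {n : ℕ} (x : Fin n → ℝ) : Equiv.Perm (Fin n) :=
  (Fin.revPerm).trans (Tuple.sort x)

lemma x_tau {n : ℕ} (x : Fin n → ℝ) (i : Fin n) : x (tau x i) = sortDesc x i := rfl

/-- Lemma B -/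
lemma exists_weight {n : ℕ} (k : ℕ) (hkn : k ≤ n) (x : Fin n → ℝ) :
    ∃ w : Fin n → ℝ, (∀ i, 0 ≤ w i ∧ w i ≤ 1) ∧ (∑ i, w i = k) ∧
      (∑ i, w i * x i = sumLargest k x) := by
  refine ⟨fun i => if (((tau x).symm i : Fin n) : ℕ) < k then 1 else 0, ?_, ?_, ?_⟩
  · intro i; dsimp only; split <;> norm_num
  · rw [← Equiv.sum_comp (tau x) (fun i => if ((((tau x).symm i : Fin n)) : ℕ) < k then (1:ℝ) else 0)]
    simp only [Equiv.symm_apply_apply]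
    rw [sum_ite_const hkn]; ring
  · rw [← Equiv.sum_comp (tau x) (fun i => (if ((((tau x).symm i : Fin n)) : ℕ) < k then (1:ℝ) else 0) * x i)]
    simp only [Equiv.symm_apply_apply, x_tau]
    unfold sumLargest
    congr 1; funext i; split <;> simp

/-- Lemma A -/
lemma weight_le {n : ℕ} (k : ℕ) (hk1 : 1 ≤ k) (hkn : k ≤ n) (x : Fin n → ℝ)
    (s : ℝ) (w : Fin n → ℝ) (hw : ∀ i, 0 ≤ w i ∧ w i ≤ s) (hsum : ∑ i, w i = s * k) :
    ∑ i, w i * x i ≤ s * sumLargest k x := by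
  set d := sortDesc x with hd
  set c := d ⟨k - 1, by omega⟩ with hc
  have hstep : ∑ i : Fin n, w (tau x i) * d i ≤
      ∑ i : Fin n, (s * (if (i : ℕ) < k then d i else 0) + (w (tau x i) - if (i : ℕ) < k then s else 0) * c) := by
    apply Finset.sum_le_sum
    intro i _
    by_cases hik : (i : ℕ) < k
    · simp only [hik, if_pos]
      have hdc : c ≤ d i := sortDesc_antitone x (by simp [Fin.le_def]; omega)
      have := mul_le_mul_of_nonpos_left hdc (sub_nonpos.mpr (hw (tau x i)).2)
      nlinarith []
    · simp only [hik, if_neg, not_false_iff]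
      have hdc : d i ≤ c := sortDesc_antitone x (by simp [Fin.le_def]; omega)
      have := mul_le_mul_of_nonneg_left hdc (hw (tau x i)).1
      nlinarith []
  have h1 : ∑ i, w i * x i = ∑ i, w (tau x i) * d i := by
    rw [← Equiv.sum_comp (tau x) (fun i => w i * x i)]
    simp only [x_tau]; rfl
  have h2 : ∑ i, w (tau x i) = s * k := by
    rw [Equiv.sum_comp (tau x) w]; exact hsum
  rw [h1]
  refine hstep.trans (le_of_eq ?_)
  rw [Finset.sum_add_distrib, ← Finset.mul_sum]
  simp only [sub_mul]
  rw [Finset.sum_sub_distrib]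
  rw [← Finset.sum_mul, h2]
  have : ∑ i : Fin n, (if (i : ℕ) < k then s else 0) * c = k * s * c := by
    rw [← Finset.sum_mul, sum_ite_const hkn]
  rw [this]
  unfold sumLargest
  ring


/-- For `1 ≤ k ≤ n`, the dual cone of the sum-of-largest-entries cone
`K_vSum = {(t, x) : ∑_{i=1}^k x_{[i]} ≤ t}` with respect to the standard inner product
on `ℝ^{n+1}` equals `{(t, x) : −t ≤ xᵢ ≤ 0 for all i, ∑ᵢ xᵢ = −t·k}`. -/
theorem stmt9 {n : ℕ} (k : ℕ) (hk1 : 1 ≤ k) (hkn : k ≤ n) :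
    {y : ℝ × (Fin n → ℝ) |
        ∀ z ∈ {z : ℝ × (Fin n → ℝ) | sumLargest k z.2 ≤ z.1},
          y.1 * z.1 + ∑ i, y.2 i * z.2 i ≥ 0} =
    {y : ℝ × (Fin n → ℝ) |
        (∀ i, -y.1 ≤ y.2 i ∧ y.2 i ≤ 0) ∧ ∑ i, y.2 i = -y.1 * k} := by
  ext y
  simp only [Set.mem_setOf_eq]
  constructor
  · intro hy
    -- compute sumLargest at test vectors via exists_weight
    have key : ∀ (v : Fin n → ℝ) (t : ℝ),
        (∀ w : Fin n → ℝ, (∀ i, 0 ≤ w i ∧ w i ≤ 1) → ∑ i, w i = k → ∑ i, w i * v i ≤ t) →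
        y.1 * t + ∑ i, y.2 i * v i ≥ 0 := by
      intro v t hb
      obtain ⟨w, hw1, hw2, hw3⟩ := exists_weight k hkn v
      exact hy (t, v) (by simp only [Set.mem_setOf_eq, ← hw3]; exact hb w hw1 hw2)
    have hyle : ∀ j, y.2 j ≤ 0 := by
      intro j
      have := key (fun i => if i = j then -1 else 0) 0 ?_
      · simpa using this
      · intro w hw1 hw2
        simp only [mul_ite, mul_neg_one, mul_zero, Finset.sum_ite_eq', Finset.mem_univ, if_pos]
        linarith [(hw1 j).1]
    have hyge : ∀ j, -y.1 ≤ y.2 j := by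
      intro j
      have := key (fun i => if i = j then 1 else 0) 1 ?_
      · simp only [mul_ite, mul_one, mul_zero, Finset.sum_ite_eq', Finset.mem_univ, if_pos] at this
        linarith
      · intro w hw1 hw2
        simp only [mul_ite, mul_one, mul_zero, Finset.sum_ite_eq', Finset.mem_univ, if_pos]
        exact (hw1 j).2
    have h1 : y.1 * k + ∑ i, y.2 i ≥ 0 := by
      have := key (fun _ => 1) k ?_
      · simpa using this
      · intro w hw1 hw2; simp [hw2]
    have h2 : y.1 * (-(k:ℝ)) + ∑ i, -(y.2 i) ≥ 0 := by
      have := key (fun _ => -1) (-(k:ℝ)) ?_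
      · simpa using this
      · intro w hw1 hw2; simp [hw2]
    refine ⟨fun j => ⟨hyge j, hyle j⟩, ?_⟩
    rw [Finset.sum_neg_distrib] at h2
    have : ∑ i, y.2 i = -(y.1 * k) := by linarith
    rw [this]; ring
  · rintro ⟨hb, hs⟩ z hz
    replace hz : sumLargest k z.2 ≤ z.1 := hz
    have hn : 0 < n := lt_of_lt_of_le hk1 hkn
    have hs0 : 0 ≤ y.1 := by
      have := hb ⟨0, hn⟩; linarith [this.1, this.2]
    have hA := weight_le k hk1 hkn z.2 y.1 (fun i => -y.2 i)
      (fun i => by constructor <;> linarith [(hb i).1, (hb i).2])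
      (by rw [Finset.sum_neg_distrib, hs]; ring)
    have : ∑ i, -y.2 i * z.2 i = -∑ i, y.2 i * z.2 i := by
      rw [← Finset.sum_neg_distrib]; congr 1; funext i; ring
    rw [this] at hA
    have := mul_le_mul_of_nonneg_left hz hs0
    linarith
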